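/- Let φ be differentiable with L-Lipschitz gradient, D convex compact, x_t ∈ D, and x_t^⋆ = proj_D(x_t - (1/L)∇φ(x_t)). Then gap_DC(x_t) ≥ (L/2)‖x_t - x_t^⋆‖², where gap_DC is computed with respect to the decomposition f(x) = (L/2)‖x‖², g(x) = (L/2)‖x‖² - φ(x); explicitly gap_DC(x_t) = max_{x ∈ D} { ⟨∇φ(x_t), x_t - x⟩ - (L/2)‖x - x_t‖² }. -/
import Mathlib


set_option maxHeartbeats 1000000
open scoped RealInnerProductSpace

theorem gapDC_ge_gapPGM {d : ℕ} (L : ℝ) (hL : 0 < L)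
    (D : Set (EuclideanSpace ℝ (Fin d))) (hDconv : Convex ℝ D) (hDcpt : IsCompact D)
    (φ : EuclideanSpace ℝ (Fin d) → ℝ) (hdiff : Differentiable ℝ φ)
    (hlip : ∀ x y, ‖gradient φ x - gradient φ y‖ ≤ L * ‖x - y‖)
    (xt : EuclideanSpace ℝ (Fin d)) (hxt : xt ∈ D)
    (xs : EuclideanSpace ℝ (Fin d)) (hxs : xs ∈ D)
    -- `xs` is the Euclidean projection of `xt - (1/L) ∇φ(xt)` onto `D`
    (hproj : ∀ y ∈ D,
      ‖xt - (1 / L) • gradient φ xt - xs‖ ≤ ‖xt - (1 / L) • gradient φ xt - y‖) :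
    L / 2 * ‖xt - xs‖ ^ 2 ≤
      ⨆ x ∈ D, (⟪gradient φ xt, xt - x⟫ - L / 2 * ‖x - xt‖ ^ 2) := by
  set g := gradient φ xt with hg
  set u := xt - (1 / L) • g with hu
  set f : EuclideanSpace ℝ (Fin d) → ℝ :=
    fun x => ⟪g, xt - x⟫ - L / 2 * ‖x - xt‖ ^ 2 with hf
  -- variational inequality
  have hinf : ‖u - xs‖ = ⨅ w : D, ‖u - w‖ := by
    haveI : Nonempty D := ⟨⟨xs, hxs⟩⟩
    have hbdd : BddBelow (Set.range fun w : D => ‖u - (w : EuclideanSpace ℝ (Fin d))‖) :=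
      ⟨0, by rintro _ ⟨w, rfl⟩; exact norm_nonneg _⟩
    refine le_antisymm (le_ciInf fun w => hproj w w.2) (ciInf_le hbdd ⟨xs, hxs⟩)
  have hVI : ⟪u - xs, xt - xs⟫ ≤ 0 :=
    ((norm_eq_iInf_iff_real_inner_le_zero hDconv hxs).1 hinf) xt hxt
  have hexp : ⟪u - xs, xt - xs⟫ = ‖xt - xs‖ ^ 2 - (1 / L) * ⟪g, xt - xs⟫ := by
    rw [hu, sub_right_comm, inner_sub_left, real_inner_smul_left,
      real_inner_self_eq_norm_sq]
  have hkey : L * ‖xt - xs‖ ^ 2 ≤ ⟪g, xt - xs⟫ := by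
    rw [hexp] at hVI
    have h1 : ‖xt - xs‖ ^ 2 ≤ (1 / L) * ⟪g, xt - xs⟫ := by linarith
    calc L * ‖xt - xs‖ ^ 2 ≤ L * ((1 / L) * ⟪g, xt - xs⟫) := by
          exact mul_le_mul_of_nonneg_left h1 hL.le
      _ = ⟪g, xt - xs⟫ := by field_simp
  have hval : L / 2 * ‖xt - xs‖ ^ 2 ≤ f xs := by
    have : ‖xs - xt‖ = ‖xt - xs‖ := norm_sub_rev _ _
    simp only [hf, this]
    nlinarith [sq_nonneg ‖xt - xs‖]
  -- boundedness of f on D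
  obtain ⟨M, hM⟩ : ∃ M, ∀ x ∈ D, f x ≤ M := by
    have hc : ContinuousOn f D := by
      apply ContinuousOn.sub
      · exact (continuous_const.inner (continuous_const.sub continuous_id)).continuousOn
      · exact (continuous_const.mul
          (((continuous_id.sub continuous_const).norm).pow 2)).continuousOn
    obtain ⟨M, hM⟩ := hDcpt.exists_bound_of_continuousOn hc
    exact ⟨M, fun x hx => (le_abs_self _).trans (hM x hx)⟩
  have hbdd : BddAbove (Set.range fun x => ⨆ _ : x ∈ D, f x) := by
    refine ⟨max M 0, ?_⟩
    rintro _ ⟨x, rfl⟩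
    by_cases hx : x ∈ D
    · haveI : Nonempty (x ∈ D) := ⟨hx⟩
      simpa [ciSup_const] using le_max_of_le_left (hM x hx)
    · haveI : IsEmpty (x ∈ D) := ⟨hx⟩
      simpa [Real.iSup_of_isEmpty] using le_max_right M 0
  calc L / 2 * ‖xt - xs‖ ^ 2 ≤ f xs := hval
    _ ≤ ⨆ _ : xs ∈ D, f xs := by
        haveI : Nonempty (xs ∈ D) := ⟨hxs⟩
        simp [ciSup_const]
    _ ≤ ⨆ x ∈ D, f x := le_ciSup hbdd xs
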